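/- Let f(u) = e^u − u − 1 and for x > 2 let ζ(x) > 0 be the unique positive solution of u(e^u − 1)/f(u) = x. Then ζ is differentiable on (2, ∞) with dζ/dx = f(ζ(x))² / ((e^{ζ(x)} − 1)² − ζ(x)² e^{ζ(x)}), and in particular dζ/dx > 0 for all x > 2. -/

import Mathlib

open Real Filter Set
open scoped Topology

noncomputable def gAux : ℝ → ℝ := fun u => u * (Real.exp u - 1) / (Real.exp u - u - 1)

lemma fpos_aux {u : ℝ} (hu : 0 < u) : 0 < Real.exp u - u - 1 := by
  have := Real.add_one_lt_exp (ne_of_gt hu)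
  linarith

lemma Dpos_aux {u : ℝ} (hu : 0 < u) :
    0 < (Real.exp u - 1) ^ 2 - u ^ 2 * Real.exp u := by
  have h2 : (0:ℝ) < u / 2 := by linarith
  have hs := Real.self_lt_sinh_iff.mpr h2
  rw [Real.sinh_eq] at hs
  have hE : Real.exp u = Real.exp (u / 2) * Real.exp (u / 2) := by
    rw [← Real.exp_add]; ring_nf
  have h1 : Real.exp (-(u / 2)) * Real.exp (u / 2) = 1 := by
    rw [← Real.exp_add]; simp
  have hEpos : 0 < Real.exp (u / 2) := Real.exp_pos _
  have hEgt : 1 < Real.exp (u / 2) := by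
    have := Real.add_one_lt_exp (ne_of_gt h2); linarith
  -- u * exp(u/2) < exp u - 1
  have key : u * Real.exp (u / 2) < Real.exp u - 1 := by
    have : u < Real.exp (u / 2) - Real.exp (-(u / 2)) := by linarith
    have := (mul_lt_mul_of_pos_right this hEpos)
    rw [sub_mul, ← hE] at this
    nlinarith
  nlinarith [mul_pos hu hEpos, sq_nonneg (Real.exp u - 1)]

lemma gAux_hasStrictDerivAt {u : ℝ} (hu : 0 < u) :
    HasStrictDerivAt gAux
      (((Real.exp u - 1) ^ 2 - u ^ 2 * Real.exp u) / (Real.exp u - u - 1) ^ 2) u := by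
  have hfne : Real.exp u - u - 1 ≠ 0 := ne_of_gt (fpos_aux hu)
  have h1 : HasStrictDerivAt (fun v : ℝ => v * (Real.exp v - 1))
      (1 * (Real.exp u - 1) + u * Real.exp u) u :=
    (hasStrictDerivAt_id u).mul ((Real.hasStrictDerivAt_exp u).sub_const 1)
  have h2 : HasStrictDerivAt (fun v : ℝ => Real.exp v - v - 1)
      (Real.exp u - 1) u := by
    have := ((Real.hasStrictDerivAt_exp u).sub (hasStrictDerivAt_id u)).sub_const 1
    exact this
  have h3 := h1.div h2 hfne
  convert h3 using 1
  · rfl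
  · rfl
  · rfl
  · field_simp
    ring

lemma gAux_strictMonoOn : StrictMonoOn gAux (Set.Ioi 0) := by
  apply strictMonoOn_of_deriv_pos (convex_Ioi 0)
  · intro u hu
    exact ((gAux_hasStrictDerivAt hu).hasDerivAt.continuousAt).continuousWithinAt
  · intro u hu
    rw [interior_Ioi] at hu
    rw [(gAux_hasStrictDerivAt hu).hasDerivAt.deriv]
    exact div_pos (Dpos_aux hu) (pow_pos (fpos_aux hu) 2)

/-- With `f(u) = e^u - u - 1` and `ζ(x)` the unique positive root of
`ζ(e^ζ-1)/f(ζ) = x` for `x > 2`, the function `ζ` is differentiable on `(2, ∞)` with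
`ζ'(x) = f(ζ(x))² / ((e^{ζ(x)}-1)² - ζ(x)² e^{ζ(x)}) > 0`. -/
theorem stmt_12 (f ζ : ℝ → ℝ)
    (hf : ∀ u, f u = Real.exp u - u - 1)
    (hζ : ∀ x > 2, 0 < ζ x ∧ ζ x * (Real.exp (ζ x) - 1) / f (ζ x) = x) :
    ∀ x > 2,
      HasDerivAt ζ
        (f (ζ x) ^ 2 / ((Real.exp (ζ x) - 1) ^ 2 - ζ x ^ 2 * Real.exp (ζ x))) x ∧
      0 < f (ζ x) ^ 2 / ((Real.exp (ζ x) - 1) ^ 2 - ζ x ^ 2 * Real.exp (ζ x)) := by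
  intro x hx
  obtain ⟨ha0, hax⟩ := hζ x hx
  set a := ζ x with ha_def
  rw [hf] at hax ⊢
  have hgax : gAux a = x := by simpa [gAux] using hax
  have hD := Dpos_aux ha0
  have hfa := fpos_aux ha0
  have hpos : 0 < (Real.exp a - a - 1) ^ 2 /
      ((Real.exp a - 1) ^ 2 - a ^ 2 * Real.exp a) :=
    div_pos (pow_pos hfa 2) hD
  refine ⟨?_, hpos⟩
  set F' : ℝ := ((Real.exp a - 1) ^ 2 - a ^ 2 * Real.exp a) / (Real.exp a - a - 1) ^ 2
    with hF'_def
  have hF'pos : 0 < F' := div_pos hD (pow_pos hfa 2)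
  have hne : F' ≠ 0 := ne_of_gt hF'pos
  have hF : HasStrictDerivAt gAux F' a := gAux_hasStrictDerivAt ha0
  set inv := hF.localInverse gAux F' a hne with hinv_def
  have hinv_deriv : HasStrictDerivAt inv F'⁻¹ (gAux a) := hF.to_localInverse hne
  have H := hF.hasStrictFDerivAt_equiv hne
  have hinv_a : inv (gAux a) = a := H.localInverse_apply_image
  have hright : ∀ᶠ y in 𝓝 (gAux a), gAux (inv y) = y := H.eventually_right_inverse
  have hcont : ContinuousAt inv (gAux a) := H.localInverse_continuousAt
  have hinv_mem : ∀ᶠ y in 𝓝 (gAux a), inv y ∈ Set.Ioi (0:ℝ) := by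
    have : Set.Ioi (0:ℝ) ∈ 𝓝 (inv (gAux a)) := by
      rw [hinv_a]; exact isOpen_Ioi.mem_nhds ha0
    exact hcont.eventually_mem this
  have heq : ζ =ᶠ[𝓝 x] inv := by
    rw [hgax] at hright hinv_mem
    have hx2 : ∀ᶠ y in 𝓝 x, y ∈ Set.Ioi (2:ℝ) :=
      isOpen_Ioi.eventually_mem hx
    filter_upwards [hx2, hright, hinv_mem] with y hy2 hry hmy
    obtain ⟨hy0, hyeq⟩ := hζ y hy2
    have hgy : gAux (ζ y) = y := by
      rw [hf] at hyeq; simpa [gAux] using hyeq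
    exact gAux_strictMonoOn.injOn hy0 hmy (hgy.trans hry.symm)
  have hfin : HasDerivAt ζ F'⁻¹ x := by
    have h1 : HasDerivAt inv F'⁻¹ x := by
      rw [← hgax]; exact hinv_deriv.hasDerivAt
    exact h1.congr_of_eventuallyEq heq
  have : F'⁻¹ = (Real.exp a - a - 1) ^ 2 /
      ((Real.exp a - 1) ^ 2 - a ^ 2 * Real.exp a) := by
    rw [hF'_def, inv_div]
  rwa [this] at hfin
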